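/- Let X be the Jacobi matrix of the Jacobi sequence ω n = (n+1)² and α n = 2n + 1 (the quantum decomposition of the exponential distribution). Then for every natural number m, lim_{k→∞} ⟨((X − (2k+1))/√((k+1)² + k²))^m e_k, e_k⟩ = ∫_{−√2}^{√2} x^m/(π√(2−x²)) dx. -/

import Mathlib

open Filter

/-- The Jacobi matrix of a Jacobi sequence `(ω, α)`, acting on finitely supported
real sequences indexed by `ℕ`:
`X e_n = √(ω n)·e_{n+1} + α n·e_n + √(ω (n-1))·e_{n-1}`, last term omitted for `n = 0`. -/
noncomputable def jacobiOp (ω α : ℕ → ℝ) : (ℕ →₀ ℝ) →ₗ[ℝ] (ℕ →₀ ℝ) :=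
  Finsupp.lsum ℝ fun n => LinearMap.toSpanSingleton ℝ (ℕ →₀ ℝ)
    (Real.sqrt (ω n) • Finsupp.single (n + 1) 1 + α n • Finsupp.single n 1 +
      if n = 0 then 0 else Real.sqrt (ω (n - 1)) • Finsupp.single (n - 1) 1)

section JacobiAux
open Filter Real Set MeasureTheory intervalIntegral

lemma X_single_apply (a p : ℕ) (b : ℝ) :
    (jacobiOp (fun n => ((n : ℝ) + 1) ^ 2) (fun n => 2 * (n : ℝ) + 1) (Finsupp.single a b)) p
      = p * (Finsupp.single a b) (p - 1) + (2 * p + 1) * (Finsupp.single a b) p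
        + (p + 1) * (Finsupp.single a b) (p + 1) := by
  have hsq : ∀ n : ℕ, Real.sqrt (((n : ℝ) + 1) ^ 2) = (n : ℝ) + 1 := fun n => by
    rw [Real.sqrt_sq (by positivity)]
  simp only [jacobiOp, Finsupp.lsum_apply, Finsupp.sum_single_index,
    LinearMap.toSpanSingleton_apply, LinearMap.map_zero, hsq]
  rcases a with _ | a
  · simp only [if_true, Finsupp.coe_zero, Pi.zero_apply, add_zero, Finsupp.smul_apply, Finsupp.add_apply,
      Finsupp.single_apply, Nat.cast_zero, smul_eq_mul]
    split_ifs <;>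
      first
        | contradiction
        | (exfalso; omega)
        | (push_cast; ring1)
        | ((have hp : p = 1 := by omega); subst hp; push_cast; ring1)
        | ((have hp : p = 0 := by omega); subst hp; push_cast; ring1)
  · have hne : ¬ (a + 1 = 0) := by omega
    simp only [if_neg hne, Finsupp.smul_apply, Finsupp.add_apply,
      Finsupp.single_apply, smul_eq_mul, Nat.add_sub_cancel]
    split_ifs <;>
      first
        | contradiction
        | (exfalso; omega)
        | (push_cast; ring1)
        | ((have hp : p = a + 2 := by omega); subst hp; push_cast; ring1)
        | ((have hp : p = a + 1 := by omega); subst hp; push_cast; ring1)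
        | ((have hp : p = a := by omega); subst hp; push_cast; ring1)

lemma X_apply (w : ℕ →₀ ℝ) (p : ℕ) :
    (jacobiOp (fun n => ((n : ℝ) + 1) ^ 2) (fun n => 2 * (n : ℝ) + 1) w) p
      = p * w (p - 1) + (2 * p + 1) * w p + (p + 1) * w (p + 1) := by
  induction w using Finsupp.induction_linear with
  | zero => simp
  | add f g hf hg => rw [map_add, Finsupp.add_apply, hf, hg]; simp [Finsupp.add_apply]; ring
  | single a b => exact X_single_apply a p b

noncomputable def nrm (k : ℕ) : ℝ := Real.sqrt (((k : ℝ) + 1) ^ 2 + (k : ℝ) ^ 2)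

noncomputable def cseq (k : ℕ) : ℕ → ℤ → ℝ
  | 0, i => if i = 0 then 1 else 0
  | j+1, i =>
      ((k : ℝ) + ((i : ℝ) - 1 - (j : ℝ))) / nrm k * cseq k j (i - 2)
    + 2 * ((i : ℝ) - 1 - (j : ℝ)) / nrm k * cseq k j (i - 1)
    + ((k : ℝ) + ((i : ℝ) - (j : ℝ))) / nrm k * cseq k j i

lemma jacobi_pow_apply (k j p : ℕ) :
    ((((1 / Real.sqrt (((k : ℝ) + 1) ^ 2 + (k : ℝ) ^ 2)) •
        (jacobiOp (fun n => ((n : ℝ) + 1) ^ 2) (fun n => 2 * (n : ℝ) + 1) -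
          (2 * (k : ℝ) + 1) • (1 : (ℕ →₀ ℝ) →ₗ[ℝ] (ℕ →₀ ℝ)))) ^ j)
      (Finsupp.single k 1)) p = cseq k j ((p : ℤ) - (k : ℤ) + (j : ℤ)) := by
  induction j generalizing p with
  | zero =>
    simp only [pow_zero, Module.End.one_apply, cseq, Nat.cast_zero, add_zero]
    rw [Finsupp.single_apply]
    split_ifs with h1 h2 h2
    · rfl
    · exact absurd (by omega : (p : ℤ) - k = 0) h2
    · exact absurd (by exact_mod_cast (by omega : (k:ℤ) = p)) h1
    · rfl
  | succ j ih =>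
    rw [pow_succ', Module.End.mul_apply]
    set A := jacobiOp (fun n => ((n : ℝ) + 1) ^ 2) (fun n => 2 * (n : ℝ) + 1)
    set w := ((((1 : ℝ) / Real.sqrt (((k : ℝ) + 1) ^ 2 + (k : ℝ) ^ 2)) •
        (A - (2 * (k : ℝ) + 1) • (1 : (ℕ →₀ ℝ) →ₗ[ℝ] (ℕ →₀ ℝ)))) ^ j) (Finsupp.single k 1) with hw
    have happ : ∀ q : ℕ, w q = cseq k j ((q : ℤ) - (k : ℤ) + (j : ℤ)) := ih
    rw [LinearMap.smul_apply, LinearMap.sub_apply, LinearMap.smul_apply, Module.End.one_apply,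
      Finsupp.smul_apply, Finsupp.sub_apply, Finsupp.smul_apply, X_apply, smul_eq_mul, smul_eq_mul]
    show (1 / nrm k) * _ = _
    rw [cseq]
    rcases p with _ | q
    · simp only [Nat.zero_sub]
      rw [happ, happ]
      push_cast
      ring_nf
    · have hs : (q + 1) - 1 = q := by omega
      rw [hs, happ, happ, happ]
      push_cast
      ring_nf

open Filter

noncomputable def gam : ℕ → ℤ → ℝ
  | 0, i => if i = 0 then 1 else 0
  | j+1, i => (gam j (i - 2) + gam j i) / Real.sqrt 2

lemma nrm_pos (k : ℕ) : 0 < nrm k := by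
  apply Real.sqrt_pos.2
  positivity

lemma tendsto_nrm_atTop : Tendsto (fun k : ℕ => nrm k) atTop atTop := by
  have hsqrtT : Tendsto Real.sqrt atTop atTop := by
    apply tendsto_atTop_atTop.2
    intro b
    refine ⟨b ^ 2, fun a ha => ?_⟩
    have h1 : |b| ≤ Real.sqrt a := by
      rw [← Real.sqrt_sq_eq_abs]; exact Real.sqrt_le_sqrt ha
    exact (le_abs_self b).trans h1
  have hin : Tendsto (fun k : ℕ => ((k : ℝ) + 1) ^ 2 + (k : ℝ) ^ 2) atTop atTop := by
    apply tendsto_atTop_mono (fun k : ℕ => ?_) tendsto_natCast_atTop_atTop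
    nlinarith [sq_nonneg ((k : ℝ)), (Nat.cast_nonneg k : (0:ℝ) ≤ k)]
  exact hsqrtT.comp hin

lemma tendsto_const_div_nrm (c : ℝ) :
    Tendsto (fun k : ℕ => c / nrm k) atTop (nhds 0) :=
  tendsto_const_nhds.div_atTop tendsto_nrm_atTop

lemma tendsto_nrm_div : Tendsto (fun k : ℕ => nrm k / (k : ℝ)) atTop (nhds (Real.sqrt 2)) := by
  have hinv : Tendsto (fun k : ℕ => 1 / (k : ℝ)) atTop (nhds 0) :=
    tendsto_one_div_atTop_nhds_zero_nat
  have hcont : Tendsto (fun x : ℝ => Real.sqrt ((1 + x) ^ 2 + 1)) (nhds 0) (nhds (Real.sqrt 2)) := by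
    have hc : Continuous fun x : ℝ => Real.sqrt ((1 + x) ^ 2 + 1) :=
      Real.continuous_sqrt.comp (by continuity)
    have := hc.tendsto 0
    norm_num at this
    exact this
  refine (hcont.comp hinv).congr' ?_
  filter_upwards [eventually_ge_atTop 1] with k hk
  have hk0 : (0 : ℝ) < (k : ℝ) := by exact_mod_cast Nat.pos_of_ne_zero (by omega)
  have harg : (1 + 1 / (k : ℝ)) ^ 2 + 1 = (((k : ℝ) + 1) ^ 2 + (k : ℝ) ^ 2) / (k : ℝ) ^ 2 := by
    field_simp
  show Real.sqrt ((1 + 1 / (k : ℝ)) ^ 2 + 1) = nrm k / (k : ℝ)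
  rw [harg, Real.sqrt_div (by positivity), Real.sqrt_sq hk0.le]
  rfl

lemma tendsto_weight (c : ℝ) :
    Tendsto (fun k : ℕ => ((k : ℝ) + c) / nrm k) atTop (nhds (Real.sqrt 2)⁻¹) := by
  have hinv : Tendsto (fun k : ℕ => 1 / (k : ℝ)) atTop (nhds 0) :=
    tendsto_one_div_atTop_nhds_zero_nat
  have h1 : Tendsto (fun k : ℕ => ((k : ℝ) + c) / (k : ℝ)) atTop (nhds 1) := by
    have := tendsto_const_nhds (x := (1:ℝ)) (f := atTop (α := ℕ)) |>.add (hinv.const_mul c)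
    norm_num at this
    refine this.congr' ?_
    filter_upwards [eventually_ge_atTop 1] with k hk
    have hk0 : ((k : ℝ)) ≠ 0 := by
      have : (0:ℕ) < k := by omega
      positivity
    field_simp
  have h2 := h1.div tendsto_nrm_div (by positivity : Real.sqrt 2 ≠ 0)
  rw [one_div] at h2
  refine h2.congr' ?_
  filter_upwards [eventually_ge_atTop 1] with k hk
  have hk0 : ((k : ℝ)) ≠ 0 := by
    have : (0:ℕ) < k := by omega
    positivity
  have hn := (nrm_pos k).ne'
  rw [Pi.div_apply]
  field_simp

lemma tendsto_cseq (j : ℕ) (i : ℤ) :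
    Tendsto (fun k : ℕ => cseq k j i) atTop (nhds (gam j i)) := by
  induction j generalizing i with
  | zero => simp only [cseq, gam]; exact tendsto_const_nhds
  | succ j ih =>
    have hup := (tendsto_weight ((i : ℝ) - 1 - (j : ℝ))).mul (ih (i - 2))
    have hst := (tendsto_const_div_nrm (2 * ((i : ℝ) - 1 - (j : ℝ)))).mul (ih (i - 1))
    have hdn := (tendsto_weight ((i : ℝ) - (j : ℝ))).mul (ih i)
    have h := (hup.add hst).add hdn
    have hval : (Real.sqrt 2)⁻¹ * gam j (i - 2) + 0 * gam j (i - 1) + (Real.sqrt 2)⁻¹ * gam j i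
        = gam (j + 1) i := by
      show _ = (gam j (i - 2) + gam j i) / Real.sqrt 2
      field_simp
      ring
    rw [hval] at h
    refine h.congr (fun k => ?_)
    show _ = cseq k (j + 1) i
    rw [cseq]

open Filter Real Set MeasureTheory intervalIntegral

lemma sqrtTwoSin_image :
    (fun θ : ℝ => Real.sqrt 2 * Real.sin θ) '' (Set.Ioo (-(π/2)) (π/2))
      = Set.Ioo (-Real.sqrt 2) (Real.sqrt 2) := by
  have h2 : (0:ℝ) < Real.sqrt 2 := by positivity
  apply Set.Subset.antisymm
  · rintro x ⟨θ, hθ, rfl⟩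
    have hm : θ ∈ Set.Icc (-(π/2)) (π/2) := Set.mem_Icc_of_Ioo hθ
    have hl : Real.sin (-(π/2)) < Real.sin θ :=
      Real.strictMonoOn_sin (by constructor <;> simp [Real.pi_pos.le] <;> linarith [Real.pi_pos]) hm hθ.1
    have hr : Real.sin θ < Real.sin (π/2) :=
      Real.strictMonoOn_sin hm (by constructor <;> simp [Real.pi_pos.le] <;> linarith [Real.pi_pos]) hθ.2
    rw [Real.sin_pi_div_two] at hr
    rw [Real.sin_neg, Real.sin_pi_div_two] at hl
    simp only [Set.mem_Ioo]
    constructor <;> nlinarith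
  · have hab : -(π/2) ≤ π/2 := by linarith [Real.pi_pos]
    have hco : ContinuousOn (fun θ : ℝ => Real.sqrt 2 * Real.sin θ) (Set.Icc (-(π/2)) (π/2)) :=
      (continuous_const.mul Real.continuous_sin).continuousOn
    have := intermediate_value_Ioo hab hco
    simpa [Real.sin_neg, Real.sin_pi_div_two, mul_neg] using this

lemma integral_arcsine_eq (m : ℕ) :
    (∫ x in (-Real.sqrt 2)..(Real.sqrt 2), x ^ m / (Real.pi * Real.sqrt (2 - x ^ 2)))
      = Real.sqrt 2 ^ m / Real.pi * ∫ x in (-(π/2))..(π/2), Real.sin x ^ m := by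
  have h2 : (0:ℝ) < Real.sqrt 2 := by positivity
  have hle : -Real.sqrt 2 ≤ Real.sqrt 2 := by linarith
  have hle' : -(π/2) ≤ π/2 := by linarith [Real.pi_pos]
  rw [intervalIntegral.integral_of_le hle, MeasureTheory.integral_Ioc_eq_integral_Ioo, ← sqrtTwoSin_image]
  rw [MeasureTheory.integral_image_eq_integral_abs_deriv_smul measurableSet_Ioo
    (fun θ _ => ((Real.hasDerivAt_sin θ).const_mul (Real.sqrt 2)).hasDerivWithinAt)
    (fun a ha b hb hab => Real.injOn_sin (Set.mem_Icc_of_Ioo ha) (Set.mem_Icc_of_Ioo hb)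
      (mul_left_cancel₀ h2.ne' hab))]
  rw [MeasureTheory.setIntegral_congr_fun measurableSet_Ioo
    (g := fun θ : ℝ => Real.sqrt 2 ^ m / Real.pi * Real.sin θ ^ m) ?_]
  · rw [MeasureTheory.integral_const_mul, intervalIntegral.integral_of_le hle',
      MeasureTheory.integral_Ioc_eq_integral_Ioo]
  · intro θ hθ
    have hcos : 0 < Real.cos θ := Real.cos_pos_of_mem_Ioo hθ
    have hsq : (Real.sqrt 2 * Real.sin θ) ^ 2 = 2 * Real.sin θ ^ 2 := by
      rw [mul_pow, Real.sq_sqrt (by norm_num)]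
    have hc2 : 2 - (Real.sqrt 2 * Real.sin θ) ^ 2 = 2 * Real.cos θ ^ 2 := by
      rw [hsq]
      nlinarith [Real.sin_sq_add_cos_sq θ]
    have hsqrt : Real.sqrt (2 - (Real.sqrt 2 * Real.sin θ) ^ 2) = Real.sqrt 2 * Real.cos θ := by
      rw [hc2, Real.sqrt_mul (by norm_num), Real.sqrt_sq hcos.le]
    show |Real.sqrt 2 * Real.cos θ| • ((Real.sqrt 2 * Real.sin θ) ^ m
        / (Real.pi * Real.sqrt (2 - (Real.sqrt 2 * Real.sin θ) ^ 2))) = _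
    rw [hsqrt, abs_of_pos (by positivity), smul_eq_mul, mul_pow]
    have hpi := Real.pi_ne_zero
    field_simp

lemma sin_integrable (m : ℕ) (a b : ℝ) :
    IntervalIntegrable (fun x : ℝ => Real.sin x ^ m) MeasureTheory.volume a b :=
  (Real.continuous_sin.pow m).intervalIntegrable a b

lemma sin_int_symm_even (t : ℕ) :
    (∫ x in (-(π/2))..(π/2), Real.sin x ^ (2*t)) = ∫ x in (0:ℝ)..π, Real.sin x ^ (2*t) := by
  have h1 : (∫ x in (-(π/2))..(0:ℝ), Real.sin x ^ (2*t)) = ∫ x in (0:ℝ)..(π/2), Real.sin x ^ (2*t) := by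
    have := intervalIntegral.integral_comp_neg (a := (0:ℝ)) (b := π/2)
      (fun x => Real.sin x ^ (2*t))
    rw [neg_zero] at this
    rw [← this]
    congr 1
    ext x
    rw [Real.sin_neg, Even.neg_pow (by exact even_two_mul t)]
  have h2 : (∫ x in (π/2)..π, Real.sin x ^ (2*t)) = ∫ x in (0:ℝ)..(π/2), Real.sin x ^ (2*t) := by
    have := intervalIntegral.integral_comp_sub_left (a := (0:ℝ)) (b := π/2)
      (fun x => Real.sin x ^ (2*t)) π
    rw [sub_zero, show π - π/2 = π/2 by ring] at this
    rw [← this]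
    congr 1
    ext x
    rw [Real.sin_pi_sub]
  have hs1 : (∫ x in (-(π/2))..(π/2), Real.sin x ^ (2*t))
      = (∫ x in (-(π/2))..(0:ℝ), Real.sin x ^ (2*t)) + ∫ x in (0:ℝ)..(π/2), Real.sin x ^ (2*t) :=
    (intervalIntegral.integral_add_adjacent_intervals (sin_integrable _ _ _) (sin_integrable _ _ _)).symm
  have hs2 : (∫ x in (0:ℝ)..π, Real.sin x ^ (2*t))
      = (∫ x in (0:ℝ)..(π/2), Real.sin x ^ (2*t)) + ∫ x in (π/2)..π, Real.sin x ^ (2*t) :=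
    (intervalIntegral.integral_add_adjacent_intervals (sin_integrable _ _ _) (sin_integrable _ _ _)).symm
  rw [hs1, hs2, h1, h2]

lemma sin_int_symm_odd (m : ℕ) (hm : Odd m) :
    (∫ x in (-(π/2))..(π/2), Real.sin x ^ m) = 0 := by
  have h := intervalIntegral.integral_comp_neg (a := -(π/2)) (b := π/2)
    (fun x => Real.sin x ^ m)
  rw [neg_neg] at h
  have h2 : (∫ x in (-(π/2))..(π/2), Real.sin (-x) ^ m)
      = ∫ x in (-(π/2))..(π/2), -(Real.sin x ^ m) := by
    congr 1
    ext x
    rw [Real.sin_neg, Odd.neg_pow hm]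
  rw [h2, intervalIntegral.integral_neg] at h
  linarith

lemma prod_eq_choose (t : ℕ) :
    (∏ i ∈ Finset.range t, (2*(i:ℝ)+1)/(2*(i:ℝ)+2)) = ((2*t).choose t : ℝ) / 4 ^ t := by
  induction t with
  | zero => simp
  | succ s ih =>
    rw [Finset.prod_range_succ, ih]
    have key := Nat.succ_mul_centralBinom_succ s
    unfold Nat.centralBinom at key
    have keyR : ((s:ℝ)+1) * ((2*(s+1)).choose (s+1) : ℝ) = 2 * (2*(s:ℝ)+1) * ((2*s).choose s : ℝ) := by
      exact_mod_cast congrArg (Nat.cast : ℕ → ℝ) key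
    have h1 : (2*(s:ℝ)+2) ≠ 0 := by positivity
    have h4 : (4:ℝ)^s ≠ 0 := by positivity
    field_simp
    first
      | linear_combination (2:ℝ) * 4^s * keyR
      | linear_combination (4:ℝ)^s * keyR
      | linear_combination (4:ℝ) * 4^s * keyR
      | linear_combination (-2:ℝ) * 4^s * keyR
      | linear_combination (8:ℝ) * 4^s * keyR
lemma gam_closed (j : ℕ) :
    (∀ t : ℕ, gam j (2 * (t:ℤ)) = (j.choose t : ℝ) / Real.sqrt 2 ^ j) ∧
    (∀ i : ℤ, (∀ t : ℕ, i ≠ 2 * (t:ℤ)) → gam j i = 0) := by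
  induction j with
  | zero =>
    constructor
    · intro t
      rcases Nat.eq_zero_or_pos t with rfl | ht
      · norm_num [gam]
      · have h1 : ¬ ((2 * (t:ℤ)) = 0) := by omega
        have h2 : Nat.choose 0 t = 0 := Nat.choose_eq_zero_of_lt ht
        simp [gam, h1, h2]
    · intro i hi
      have : i ≠ 0 := by
        intro h; exact hi 0 (by omega)
      simp [gam, this]
  | succ j ih =>
    obtain ⟨ihe, iho⟩ := ih
    have hs2 : Real.sqrt 2 ≠ 0 := by positivity
    have hs2p : Real.sqrt 2 ^ j ≠ 0 := by positivity
    constructor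
    · intro t
      show (gam j (2 * (t:ℤ) - 2) + gam j (2 * (t:ℤ))) / Real.sqrt 2 = _
      rcases Nat.eq_zero_or_pos t with rfl | ht
      · have h2 : gam j (2 * ((0:ℕ):ℤ) - 2) = 0 := by
          apply iho
          intro t'
          omega
        rw [h2, ihe 0, zero_add, Nat.choose_zero_right, Nat.choose_zero_right, pow_succ]
        field_simp
      · obtain ⟨s, rfl⟩ : ∃ s, t = s + 1 := ⟨t - 1, by omega⟩
        have h2 : 2 * (((s+1:ℕ)):ℤ) - 2 = 2 * ((s:ℕ):ℤ) := by push_cast; ring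
        rw [h2, ihe s, ihe (s+1), Nat.choose_succ_succ, pow_succ]
        push_cast
        field_simp
        try ring
    · intro i hi
      show (gam j (i - 2) + gam j i) / Real.sqrt 2 = 0
      have h1 : gam j (i - 2) = 0 := by
        apply iho
        intro t'
        have := hi (t' + 1)
        omega
      have h2 : gam j i = 0 := iho i hi
      rw [h1, h2]
      simp

lemma gam_diag_even (t : ℕ) : gam (2*t) ((2*t : ℕ) : ℤ) = (((2*t).choose t : ℕ) : ℝ) / 2 ^ t := by
  have h := (gam_closed (2*t)).1 t
  have harg : ((2*t : ℕ) : ℤ) = 2 * (t:ℤ) := by push_cast; ring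
  rw [harg, h, pow_mul, Real.sq_sqrt (by norm_num : (0:ℝ) ≤ 2)]

lemma gam_diag_odd (m : ℕ) (hm : Odd m) : gam m ((m : ℕ) : ℤ) = 0 := by
  apply (gam_closed m).2
  intro t
  obtain ⟨r, rfl⟩ := hm
  omega

lemma integral_eq_gam (m : ℕ) :
    (∫ x in (-Real.sqrt 2)..(Real.sqrt 2), x ^ m / (Real.pi * Real.sqrt (2 - x ^ 2)))
      = gam m ((m : ℕ) : ℤ) := by
  rw [integral_arcsine_eq]
  rcases Nat.even_or_odd m with hm | hm
  · obtain ⟨t, rfl⟩ : ∃ t, m = 2 * t := by obtain ⟨t, ht⟩ := hm; exact ⟨t, by omega⟩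
    rw [sin_int_symm_even, integral_sin_pow_even, prod_eq_choose, gam_diag_even]
    have h4 : (4:ℝ)^t = 2^t * 2^t := by rw [← mul_pow]; norm_num
    have hs2 : Real.sqrt 2 ^ (2*t) = 2^t := by
      rw [pow_mul, Real.sq_sqrt (by norm_num : (0:ℝ) ≤ 2)]
    rw [hs2, h4]
    have hpi := Real.pi_ne_zero
    have h2t : (2:ℝ)^t ≠ 0 := by positivity
    field_simp
  · rw [sin_int_symm_odd m hm, gam_diag_odd m hm, mul_zero]

end JacobiAux

/-- Classical limit of the quantum decomposition of the exponential distribution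
(`ω n = (n+1)²`, `α n = 2n+1`): the normalized moments converge to those of the
arcsine law. -/
theorem exponential_classical_limit_arcsine (m : ℕ) :
    Tendsto
      (fun k : ℕ =>
        ((((1 / Real.sqrt (((k : ℝ) + 1) ^ 2 + (k : ℝ) ^ 2)) •
            (jacobiOp (fun n => ((n : ℝ) + 1) ^ 2) (fun n => 2 * (n : ℝ) + 1) -
              (2 * (k : ℝ) + 1) • (1 : (ℕ →₀ ℝ) →ₗ[ℝ] (ℕ →₀ ℝ)))) ^ m)
          (Finsupp.single k 1)) k)
      atTop
      (nhds (∫ x in (-Real.sqrt 2)..(Real.sqrt 2), x ^ m / (Real.pi * Real.sqrt (2 - x ^ 2)))) := by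
  have hfun : (fun k : ℕ =>
      ((((1 / Real.sqrt (((k : ℝ) + 1) ^ 2 + (k : ℝ) ^ 2)) •
          (jacobiOp (fun n => ((n : ℝ) + 1) ^ 2) (fun n => 2 * (n : ℝ) + 1) -
            (2 * (k : ℝ) + 1) • (1 : (ℕ →₀ ℝ) →ₗ[ℝ] (ℕ →₀ ℝ)))) ^ m)
        (Finsupp.single k 1)) k)
      = fun k : ℕ => cseq k m ((m : ℕ) : ℤ) := by
    funext k
    rw [jacobi_pow_apply]
    congr 1
    omega
  rw [hfun, integral_eq_gam]
  exact tendsto_cseq m ((m : ℕ) : ℤ)
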